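/- Let ψ : ℚ[u₁, u₂, u₃, u₄, u₅] → ℚ[v₁, v₂, v₃, v₄] be the ℚ-algebra homomorphism determined by u₁ ↦ v₁ + v₂, u₂ ↦ v₃ + v₄, u₃ ↦ v₁² + v₂², u₄ ↦ v₃² + v₄², u₅ ↦ v₁v₄ + v₂v₃. Then the kernel of ψ is the principal ideal generated by the polynomial 2u₃u₄ + 2u₁u₂u₅ − u₂²u₃ − u₁²u₄ − 2u₅². -/
import Mathlib


open MvPolynomial



variable {R : Type*} [CommRing R]

lemma esymm_two : esymm (Fin 2) R 2 = X 0 * X 1 := by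
  rw [esymm, show Finset.powersetCard 2 (Finset.univ : Finset (Fin 2)) = {Finset.univ} by decide]
  simp [Fin.prod_univ_two]

noncomputable def esy2 (R : Type*) [CommRing R] : MvPolynomial (Fin 2) R →ₐ[R] MvPolynomial (Fin 2) R :=
  ((symmetricSubalgebra (Fin 2) R).val).comp (esymmAlgHom (Fin 2) R 2)

lemma esy2_inj (R : Type*) [CommRing R] : Function.Injective (esy2 R) :=
  Subtype.val_injective.comp (esymmAlgHom_fin_injective R le_rfl)

lemma esy2_X0 : esy2 R (X 0) = X 0 + X 1 := by
  simp [esy2, esymmAlgHom, Fin.sum_univ_two]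

lemma esy2_X1 : esy2 R (X 1) = X 0 * X 1 := by
  simp [esy2, esymmAlgHom, esymm_two]

lemma esy2_C (r : R) : esy2 R (C r) = C r := by
  have : (C r : MvPolynomial (Fin 2) R) = algebraMap R _ r := rfl
  rw [this, AlgHom.commutes]

noncomputable abbrev Bq := MvPolynomial (Fin 2) ℚ
noncomputable abbrev Cq := MvPolynomial (Fin 2) Bq

noncomputable def Theta : Cq →ₐ[ℚ] Cq :=
  ((esy2 Bq).restrictScalars ℚ).comp (mapAlgHom (esy2 ℚ))

lemma Theta_inj : Function.Injective Theta := by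
  have h1 : Function.Injective (mapAlgHom (σ := Fin 2) (esy2 ℚ)) := by
    exact map_injective (σ := Fin 2) ((esy2 ℚ) : MvPolynomial (Fin 2) ℚ →+* MvPolynomial (Fin 2) ℚ) (esy2_inj ℚ)
  exact (esy2_inj Bq).comp h1

noncomputable def Emap : MvPolynomial (Fin 4) ℚ ≃ₐ[ℚ] Cq :=
  (renameEquiv ℚ (show Fin 4 ≃ (Fin 2 ⊕ Fin 2) from (finSumFinEquiv (m := 2) (n := 2)).symm)).trans
    (sumAlgEquiv ℚ (Fin 2) (Fin 2))

noncomputable def Phi : MvPolynomial (Fin 4) ℚ →ₐ[ℚ] MvPolynomial (Fin 4) ℚ :=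
  aeval ![X 0 + X 1, X 0 * X 1, X 2 + X 3, X 2 * X 3]

lemma key : Emap.toAlgHom.comp Phi = Theta.comp Emap.toAlgHom := by
  apply MvPolynomial.algHom_ext
  intro i
  fin_cases i <;>
    simp [Phi, Emap, Theta, esy2_X0, esy2_X1, esy2_C,
      show ((finSumFinEquiv (m := 2) (n := 2)).symm (0 : Fin 4)) = Sum.inl 0 from rfl,
      show ((finSumFinEquiv (m := 2) (n := 2)).symm (1 : Fin 4)) = Sum.inl 1 from rfl,
      show ((finSumFinEquiv (m := 2) (n := 2)).symm (2 : Fin 4)) = Sum.inr 0 from rfl,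
      show ((finSumFinEquiv (m := 2) (n := 2)).symm (3 : Fin 4)) = Sum.inr 1 from rfl]

lemma Phi_inj : Function.Injective Phi := by
  have h : Function.Injective (Emap.toAlgHom.comp Phi) := by
    rw [key]
    exact Theta_inj.comp Emap.injective
  intro x y hxy
  exact h (by simp [hxy])

noncomputable def rho : MvPolynomial (Fin 4) ℚ →ₐ[ℚ] MvPolynomial (Fin 4) ℚ :=
  aeval ![X 0, X 2, X 0 ^ 2 - 2 * X 1, X 2 ^ 2 - 2 * X 3]

noncomputable def sigl : MvPolynomial (Fin 4) ℚ →ₐ[ℚ] MvPolynomial (Fin 4) ℚ :=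
  aeval ![X 0, C (2⁻¹ : ℚ) * (X 0 ^ 2 - X 2), X 1, C (2⁻¹ : ℚ) * (X 1 ^ 2 - X 3)]

lemma rho_inj : Function.Injective rho := by
  have hC : (C (2⁻¹ : ℚ) : MvPolynomial (Fin 4) ℚ) * 2 = 1 := by
    rw [show (2 : MvPolynomial (Fin 4) ℚ) = C 2 from (map_ofNat (C : ℚ →+* MvPolynomial (Fin 4) ℚ) 2).symm, ← map_mul]
    norm_num
  have h : sigl.comp rho = AlgHom.id ℚ _ := by
    apply MvPolynomial.algHom_ext
    intro i
    fin_cases i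
    · simp [rho, sigl, map_ofNat]
    · simp [rho, sigl, map_ofNat]
    · simp [rho, sigl, map_ofNat]
      linear_combination (X 2 - X 0 ^ 2 : MvPolynomial (Fin 4) ℚ) * hC
    · simp [rho, sigl, map_ofNat]
      linear_combination (X 3 - X 1 ^ 2 : MvPolynomial (Fin 4) ℚ) * hC
  have hl : Function.LeftInverse ⇑sigl ⇑rho := fun x => AlgHom.congr_fun h x
  exact hl.injective

noncomputable def T4 : MvPolynomial (Fin 4) ℚ →ₐ[ℚ] MvPolynomial (Fin 4) ℚ :=
  aeval ![X 0 + X 1, X 2 + X 3, X 0 ^ 2 + X 1 ^ 2, X 2 ^ 2 + X 3 ^ 2]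

lemma T4_eq : Phi.comp rho = T4 := by
  apply MvPolynomial.algHom_ext
  intro i
  fin_cases i <;> simp [Phi, rho, T4, map_ofNat] <;> ring

lemma T4_inj : Function.Injective T4 := by
  rw [← T4_eq]
  exact Phi_inj.comp rho_inj

noncomputable abbrev R5 := MvPolynomial (Fin 5) ℚ

noncomputable def fgen : R5 :=
  2 * X 2 * X 3 + 2 * X 0 * X 1 * X 4 - X 1 ^ 2 * X 2 - X 0 ^ 2 * X 3 - 2 * X 4 ^ 2

lemma cs0 : Fin.castSucc (0 : Fin 4) = (0 : Fin 5) := rfl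
lemma cs1 : Fin.castSucc (1 : Fin 4) = (1 : Fin 5) := rfl
lemma cs2 : Fin.castSucc (2 : Fin 4) = (2 : Fin 5) := rfl
lemma cs3 : Fin.castSucc (3 : Fin 4) = (3 : Fin 5) := rfl

lemma reduce (p : R5) :
    ∃ (n : ℕ) (A B : MvPolynomial (Fin 4) ℚ),
      (2 : R5) ^ n * p -
        (rename Fin.castSucc A + rename Fin.castSucc B * X 4) ∈ Ideal.span {fgen} := by
  induction p using MvPolynomial.induction_on with
  | C a =>
      exact ⟨0, C a, 0, by simp [rename_C]⟩
  | add p q hp hq =>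
      obtain ⟨n, A, B, h⟩ := hp
      obtain ⟨m, A', B', h'⟩ := hq
      refine ⟨n + m, 2 ^ m * A + 2 ^ n * A', 2 ^ m * B + 2 ^ n * B', ?_⟩
      have hmem := Ideal.add_mem _ (Ideal.mul_mem_left _ ((2 : R5) ^ m) h)
        (Ideal.mul_mem_left _ ((2 : R5) ^ n) h')
      convert hmem using 1
      simp only [map_add, map_mul, map_pow, map_ofNat]
      ring
  | mul_X p i hp =>
      obtain ⟨n, A, B, h⟩ := hp
      induction i using Fin.lastCases with
      | last =>
        refine ⟨n + 1, 2 * X 2 * X 3 * B - X 1 ^ 2 * X 2 * B - X 0 ^ 2 * X 3 * B,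
          2 * A + 2 * X 0 * X 1 * B, ?_⟩
        have hf : fgen ∈ Ideal.span {fgen} := Ideal.subset_span rfl
        have hmem := Ideal.add_mem _ (Ideal.mul_mem_left _ (2 * X 4) h)
          (Ideal.mul_mem_left _ (-(rename Fin.castSucc B)) hf)
        convert hmem using 1
        rw [show Fin.last 4 = (4 : Fin 5) from rfl]
        simp only [map_add, map_mul, map_pow, map_sub, map_ofNat, rename_X, fgen,
          cs0, cs1, cs2, cs3]
        ring
      | cast j =>
        refine ⟨n, A * X j, B * X j, ?_⟩
        have hmem := Ideal.mul_mem_left _ (X (Fin.castSucc j)) h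
        convert hmem using 1
        simp only [map_mul, rename_X]
        ring

noncomputable def psi : R5 →ₐ[ℚ] MvPolynomial (Fin 4) ℚ :=
  aeval ![X 0 + X 1, X 2 + X 3, X 0 ^ 2 + X 1 ^ 2, X 2 ^ 2 + X 3 ^ 2,
    X 0 * X 3 + X 1 * X 2]

lemma psi_fgen : psi fgen = 0 := by
  simp only [psi, fgen, map_add, map_sub, map_mul, map_pow, map_ofNat, aeval_X]
  rw [show (![X 0 + X 1, X 2 + X 3, X 0 ^ 2 + X 1 ^ 2, X 2 ^ 2 + X 3 ^ 2,
      X 0 * X 3 + X 1 * X 2] : Fin 5 → MvPolynomial (Fin 4) ℚ) 0 = X 0 + X 1 from rfl,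
    show (![X 0 + X 1, X 2 + X 3, X 0 ^ 2 + X 1 ^ 2, X 2 ^ 2 + X 3 ^ 2,
      X 0 * X 3 + X 1 * X 2] : Fin 5 → MvPolynomial (Fin 4) ℚ) 1 = X 2 + X 3 from rfl,
    show (![X 0 + X 1, X 2 + X 3, X 0 ^ 2 + X 1 ^ 2, X 2 ^ 2 + X 3 ^ 2,
      X 0 * X 3 + X 1 * X 2] : Fin 5 → MvPolynomial (Fin 4) ℚ) 2 = X 0 ^ 2 + X 1 ^ 2 from rfl,
    show (![X 0 + X 1, X 2 + X 3, X 0 ^ 2 + X 1 ^ 2, X 2 ^ 2 + X 3 ^ 2,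
      X 0 * X 3 + X 1 * X 2] : Fin 5 → MvPolynomial (Fin 4) ℚ) 3 = X 2 ^ 2 + X 3 ^ 2 from rfl,
    show (![X 0 + X 1, X 2 + X 3, X 0 ^ 2 + X 1 ^ 2, X 2 ^ 2 + X 3 ^ 2,
      X 0 * X 3 + X 1 * X 2] : Fin 5 → MvPolynomial (Fin 4) ℚ) 4 = X 0 * X 3 + X 1 * X 2 from rfl]
  ring

lemma psi_rename (q : MvPolynomial (Fin 4) ℚ) : psi (rename Fin.castSucc q) = T4 q := by
  rw [psi, aeval_rename, show ((![X 0 + X 1, X 2 + X 3, X 0 ^ 2 + X 1 ^ 2, X 2 ^ 2 + X 3 ^ 2,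
      X 0 * X 3 + X 1 * X 2] : Fin 5 → MvPolynomial (Fin 4) ℚ) ∘ Fin.castSucc) =
      ![X 0 + X 1, X 2 + X 3, X 0 ^ 2 + X 1 ^ 2, X 2 ^ 2 + X 3 ^ 2] from by
    funext i; fin_cases i <;> rfl]
  rfl

lemma psi_X4 : psi (X 4) = X 0 * X 3 + X 1 * X 2 := by
  rw [psi, aeval_X]
  rfl

lemma sw0 : (Equiv.swap (0 : Fin 4) 1) 0 = 1 := by decide
lemma sw1 : (Equiv.swap (0 : Fin 4) 1) 1 = 0 := by decide
lemma sw2 : (Equiv.swap (0 : Fin 4) 1) 2 = 2 := by decide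
lemma sw3 : (Equiv.swap (0 : Fin 4) 1) 3 = 3 := by decide

lemma swap_T4 (q : MvPolynomial (Fin 4) ℚ) :
    rename ⇑(Equiv.swap (0 : Fin 4) 1) (T4 q) = T4 q := by
  have h : (rename ⇑(Equiv.swap (0 : Fin 4) 1)).comp T4 = T4 := by
    apply MvPolynomial.algHom_ext
    intro i
    fin_cases i <;> simp [T4, sw0, sw1, sw2, sw3] <;> ring
  exact AlgHom.congr_fun h q

lemma Xsub_ne (i j : Fin 4) (v : Fin 4 → ℚ) (hv : eval v (X i - X j : MvPolynomial (Fin 4) ℚ) ≠ 0) :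
    (X i - X j : MvPolynomial (Fin 4) ℚ) ≠ 0 := fun hcon => by
  rw [hcon, map_zero] at hv; exact hv rfl

theorem stmt13' :
    RingHom.ker
        (aeval
          ![X 0 + X 1, X 2 + X 3, X 0 ^ 2 + X 1 ^ 2, X 2 ^ 2 + X 3 ^ 2,
            X 0 * X 3 + X 1 * X 2] :
          MvPolynomial (Fin 5) ℚ →ₐ[ℚ] MvPolynomial (Fin 4) ℚ) =
      Ideal.span
        ({2 * X 2 * X 3 + 2 * X 0 * X 1 * X 4 - X 1 ^ 2 * X 2 - X 0 ^ 2 * X 3 -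
            2 * X 4 ^ 2} : Set (MvPolynomial (Fin 5) ℚ)) := by
  have hspan : Ideal.span {fgen} ≤ RingHom.ker (psi : R5 →ₐ[ℚ] MvPolynomial (Fin 4) ℚ) := by
    rw [Ideal.span_le]
    intro x hx
    rw [Set.mem_singleton_iff] at hx
    subst hx
    simp only [SetLike.mem_coe, RingHom.mem_ker]
    exact psi_fgen
  have main : RingHom.ker (psi : R5 →ₐ[ℚ] MvPolynomial (Fin 4) ℚ) = Ideal.span {fgen} := by
    refine le_antisymm ?_ hspan
    intro p hp
    rw [RingHom.mem_ker] at hp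
    obtain ⟨n, A, B, hmem⟩ := reduce p
    have h0 : psi (rename Fin.castSucc A + rename Fin.castSucc B * X 4) = 0 := by
      have h1 : psi ((2 : R5) ^ n * p -
          (rename Fin.castSucc A + rename Fin.castSucc B * X 4)) = 0 := hspan hmem
      have h2 : psi ((2 : R5) ^ n * p) = 0 := by
        rw [map_mul, hp, mul_zero]
      rw [map_sub, h2, zero_sub, neg_eq_zero] at h1
      exact h1
    rw [map_add, map_mul, psi_rename, psi_rename, psi_X4] at h0
    have h0' : T4 A + T4 B * (X 1 * X 3 + X 0 * X 2) = 0 := by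
      have h := congrArg (rename ⇑(Equiv.swap (0 : Fin 4) 1)) h0
      simp only [map_add, map_mul, map_zero, swap_T4, rename_X, sw0, sw1, sw2, sw3] at h
      exact h
    have hprod : T4 B * ((X 0 - X 1) * (X 3 - X 2)) = 0 := by
      linear_combination h0 - h0'
    have hB : B = 0 := by
      apply T4_inj
      rw [map_zero]
      rcases mul_eq_zero.mp hprod with h | h
      · exact h
      · exfalso
        rcases mul_eq_zero.mp h with h' | h'
        · exact Xsub_ne 0 1 ![1, 0, 0, 0] (by simp) h'
        · exact Xsub_ne 3 2 ![0, 0, 0, 1] (by simp) h'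
    have hA : A = 0 := by
      apply T4_inj
      rw [map_zero]
      have := h0
      rw [hB, map_zero, zero_mul, add_zero] at this
      exact this
    simp only [hA, hB, map_zero, zero_mul, add_zero, zero_add, sub_zero] at hmem
    have hfin := Ideal.mul_mem_left _ (C ((2 : ℚ) ^ n)⁻¹) hmem
    rwa [show ((2 : R5) ^ n) = C ((2 : ℚ) ^ n) from by
        rw [map_pow, map_ofNat], ← mul_assoc, ← map_mul,
      inv_mul_cancel₀ (by positivity), map_one, one_mul] at hfin
  exact main

/-- Let `ψ : ℚ[u₁, u₂, u₃, u₄, u₅] → ℚ[v₁, v₂, v₃, v₄]` be the ℚ-algebra homomorphism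
with `u₁ ↦ v₁ + v₂`, `u₂ ↦ v₃ + v₄`, `u₃ ↦ v₁² + v₂²`, `u₄ ↦ v₃² + v₄²`,
`u₅ ↦ v₁v₄ + v₂v₃` (here `u₁ = X 0, …, u₅ = X 4` and `v₁ = X 0, …, v₄ = X 3`).
Its kernel is the principal ideal generated by
`2u₃u₄ + 2u₁u₂u₅ − u₂²u₃ − u₁²u₄ − 2u₅²`. -/

theorem stmt13 :
    RingHom.ker
        (aeval
          ![X 0 + X 1, X 2 + X 3, X 0 ^ 2 + X 1 ^ 2, X 2 ^ 2 + X 3 ^ 2,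
            X 0 * X 3 + X 1 * X 2] :
          MvPolynomial (Fin 5) ℚ →ₐ[ℚ] MvPolynomial (Fin 4) ℚ) =
      Ideal.span
        ({2 * X 2 * X 3 + 2 * X 0 * X 1 * X 4 - X 1 ^ 2 * X 2 - X 0 ^ 2 * X 3 -
            2 * X 4 ^ 2} : Set (MvPolynomial (Fin 5) ℚ)) := by
  exact stmt13'
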